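/- arXiv:0803.2283 — 7 statements merged into one kernel-verified Lean document; each statement's English description precedes it below -/
import Mathlib

section
/- Let R be a coherent risk functional and suppose there exist two assets j and k such that the return of asset j strictly exceeds the return of asset k at every observation, i.e. x_{jt} > x_{kt} for all t = 1,…,T. Then the global risk minimization problem min ρ̂(w|X) over normalized portfolios w has no solution: there is no normalized portfolio w₀ with ρ̂(w₀|X) ≤ ρ̂(w|X) for all normalized w, and moreover inf{ρ̂(w|X) : w normalized} = −∞. -/
/-- A risk functional estimator is coherent if it is monotone, subadditive,
positively homogeneous and cash (translation) invariant. -/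
def IsCoherent {T : ℕ} (R : (Fin T → ℝ) → ℝ) : Prop :=
  (∀ y z : Fin T → ℝ, (∀ t, z t ≤ y t) → R y ≤ R z) ∧
  (∀ y z : Fin T → ℝ, R (y + z) ≤ R y + R z) ∧
  (∀ (a : ℝ) (y : Fin T → ℝ), 0 < a → R (a • y) = a * R y) ∧
  (∀ (a : ℝ) (y : Fin T → ℝ), R (y + fun _ => a) = R y - a)

/-- If some asset `j` strictly outperforms some asset `k` at every observation of the
sample `X`, then the minimization of a coherent risk estimator over normalized
portfolios has no solution, and the estimated risk is unbounded from below. -/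
theorem no_solution_of_dominant_asset {N T : ℕ} (hN : 1 ≤ N) (hT : 1 ≤ T)
    (X : Fin N → Fin T → ℝ) (R : (Fin T → ℝ) → ℝ) (hR : IsCoherent R)
    (j k : Fin N) (hjk : ∀ t, X k t < X j t) :
    (¬ ∃ w₀ : Fin N → ℝ, (∑ i, w₀ i = 1) ∧
        ∀ w : Fin N → ℝ, (∑ i, w i = 1) →
          R (fun t => ∑ i, w₀ i * X i t) ≤ R (fun t => ∑ i, w i * X i t)) ∧
    (∀ M : ℝ, ∃ w : Fin N → ℝ, (∑ i, w i = 1) ∧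
        R (fun t => ∑ i, w i * X i t) < M) := by
  have hTne : Nonempty (Fin T) := ⟨⟨0, hT⟩⟩
  have hjne : j ≠ k := by
    intro h
    exact absurd (hjk ⟨0, hT⟩) (by rw [h]; exact lt_irrefl _)
  -- minimum gap
  set δ : ℝ := Finset.univ.inf' (Finset.univ_nonempty) (fun t => X j t - X k t) with hδ
  have hδpos : 0 < δ := by
    rw [hδ]
    apply Finset.lt_inf'_iff (Finset.univ_nonempty) |>.mpr
    intro t _
    linarith [hjk t]
  have key : ∀ M : ℝ, ∃ w : Fin N → ℝ, (∑ i, w i = 1) ∧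
      R (fun t => ∑ i, w i * X i t) < M := by
    intro M
    obtain ⟨hmono, _, _, hcash⟩ := hR
    set c : ℝ := max 0 ((R (X k) - M) / δ) + 1 with hc
    have hc0 : 0 ≤ c := by positivity
    refine ⟨fun i => (if i = j then c else 0) + (if i = k then 1 - c else 0), ?_, ?_⟩
    · rw [Finset.sum_add_distrib]
      simp [Finset.sum_ite_eq', hjne]
    · have hret : ∀ t, (∑ i, ((if i = j then c else 0) + (if i = k then 1 - c else 0)) * X i t)
          = c * X j t + (1 - c) * X k t := by
        intro t
        simp only [add_mul]
        rw [Finset.sum_add_distrib]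
        have h1 : ∀ i : Fin N, (if i = j then c else 0) * X i t = if i = j then c * X j t else 0 := by
          intro i; split <;> simp_all
        have h2 : ∀ i : Fin N, (if i = k then 1 - c else 0) * X i t
            = if i = k then (1 - c) * X k t else 0 := by
          intro i; split <;> simp_all
        rw [Finset.sum_congr rfl (fun i _ => h1 i), Finset.sum_congr rfl (fun i _ => h2 i)]
        simp [Finset.sum_ite_eq']
      have hlb : ∀ t, ((X k + fun _ => c * δ : Fin T → ℝ)) t ≤ (fun t => ∑ i,
          ((if i = j then c else 0) + (if i = k then 1 - c else 0)) * X i t) t := by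
        intro t
        simp only [Pi.add_apply, hret t]
        have hδle : δ ≤ X j t - X k t :=
          Finset.inf'_le _ (Finset.mem_univ t)
        have : c * δ ≤ c * (X j t - X k t) := mul_le_mul_of_nonneg_left hδle hc0
        nlinarith
      have h1 : R (fun t => ∑ i,
          ((if i = j then c else 0) + (if i = k then 1 - c else 0)) * X i t)
          ≤ R (X k + fun _ => c * δ) := hmono _ _ hlb
      have h2 : R (X k + fun _ => c * δ) = R (X k) - c * δ := hcash _ _
      have h3 : R (X k) - c * δ < M := by
        have hge : (R (X k) - M) / δ < c := by
          rw [hc]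
          have := le_max_right 0 ((R (X k) - M) / δ)
          linarith
        have := (div_lt_iff₀ hδpos).mp hge
        nlinarith
      linarith
  constructor
  · rintro ⟨w₀, hw₀sum, hw₀min⟩
    obtain ⟨w, hwsum, hwlt⟩ := key (R (fun t => ∑ i, w₀ i * X i t))
    exact absurd (hw₀min w hwsum) (not_le.mpr hwlt)
  · exact key
end

section
/- (Theorem 1.) Let R be a coherent risk functional on the sample X. If there exist two normalized portfolios u and v such that u strictly dominates v on X at every observation, then the global risk minimization problem min ρ̂(w|X) subject to ∑_i w_i = 1 has no solution: there is no normalized portfolio w₀ such that ρ̂(w₀|X) ≤ ρ̂(w|X) for all normalized portfolios w. -/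
/-- Theorem 1: if a normalized portfolio `u` strictly dominates a normalized portfolio `v`
at every observation of the sample `X`, then the minimization of a coherent risk
estimator over normalized portfolios has no solution. -/
theorem no_solution_of_strictly_dominating_pair {N T : ℕ} (hN : 1 ≤ N) (hT : 1 ≤ T)
    (X : Fin N → Fin T → ℝ) (R : (Fin T → ℝ) → ℝ) (hR : IsCoherent R)
    (u v : Fin N → ℝ) (hu : ∑ i, u i = 1) (hv : ∑ i, v i = 1)
    (hdom : ∀ t, ∑ i, v i * X i t < ∑ i, u i * X i t) :
    ¬ ∃ w₀ : Fin N → ℝ, (∑ i, w₀ i = 1) ∧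
        ∀ w : Fin N → ℝ, (∑ i, w i = 1) →
          R (fun t => ∑ i, w₀ i * X i t) ≤ R (fun t => ∑ i, w i * X i t) := by
  rintro ⟨w₀, hw₀, hmin⟩
  obtain ⟨hmono, _, _, hcash⟩ := hR
  haveI : Nonempty (Fin T) := ⟨⟨0, hT⟩⟩
  set δ : ℝ := Finset.univ.inf' Finset.univ_nonempty
    (fun t => ∑ i, u i * X i t - ∑ i, v i * X i t) with hδdef
  have hδpos : 0 < δ := by
    apply Finset.lt_inf'_iff _ |>.mpr
    intro t _
    simpa using hdom t
  -- the improved portfolio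
  set w : Fin N → ℝ := fun i => w₀ i + u i - v i with hw
  have hwsum : ∑ i, w i = 1 := by
    simp only [hw]
    rw [Finset.sum_sub_distrib, Finset.sum_add_distrib, hw₀, hu, hv]
    ring
  have key : R (fun t => ∑ i, w i * X i t) ≤
      R ((fun t => ∑ i, w₀ i * X i t) + fun _ => δ) := by
    apply hmono
    intro t
    have h1 : ∑ i, w i * X i t
        = ∑ i, w₀ i * X i t + (∑ i, u i * X i t - ∑ i, v i * X i t) := by
      simp only [hw, sub_mul, add_mul]
      rw [Finset.sum_sub_distrib, Finset.sum_add_distrib]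
      ring
    have h2 : δ ≤ ∑ i, u i * X i t - ∑ i, v i * X i t :=
      Finset.inf'_le _ (Finset.mem_univ t)
    simp only [Pi.add_apply]
    rw [h1]
    linarith
  rw [hcash δ] at key
  have := hmin w hwsum
  linarith
end

section
/- (Theorem 1, strengthened form from its proof.) Let R be a coherent risk functional on the sample X. If there exist two normalized portfolios u and v such that u strictly dominates v on X at every observation, then the estimated risk is unbounded from below on normalized portfolios: for every M ∈ ℝ there exists a normalized portfolio w with ρ̂(w|X) < M. -/
/-- Theorem 1, strengthened form: if a normalized portfolio `u` strictly dominates a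
normalized portfolio `v` at every observation of the sample `X`, then the coherent risk
estimator is unbounded from below on normalized portfolios. -/
theorem unbounded_below_of_strictly_dominating_pair {N T : ℕ} (hN : 1 ≤ N) (hT : 1 ≤ T)
    (X : Fin N → Fin T → ℝ) (R : (Fin T → ℝ) → ℝ) (hR : IsCoherent R)
    (u v : Fin N → ℝ) (hu : ∑ i, u i = 1) (hv : ∑ i, v i = 1)
    (hdom : ∀ t, ∑ i, v i * X i t < ∑ i, u i * X i t) :
    ∀ M : ℝ, ∃ w : Fin N → ℝ, (∑ i, w i = 1) ∧
        R (fun t => ∑ i, w i * X i t) < M := by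
  intro M
  obtain ⟨hmono, hsub, hhom, hcash⟩ := hR
  haveI : Nonempty (Fin T) := ⟨⟨0, hT⟩⟩
  set Yv : Fin T → ℝ := fun t => ∑ i, v i * X i t with hYv
  set d : Fin T → ℝ := fun t => (∑ i, u i * X i t) - ∑ i, v i * X i t with hd
  have hdpos : ∀ t, 0 < d t := fun t => sub_pos.mpr (hdom t)
  set δ : ℝ := Finset.univ.inf' Finset.univ_nonempty d with hδ
  have hδpos : 0 < δ := by
    apply (Finset.lt_inf'_iff _).mpr
    intro t _; exact hdpos t
  have hδle : ∀ t, δ ≤ d t := fun t =>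
    Finset.inf'_le _ (Finset.mem_univ t)
  set c : ℝ := max 1 ((R Yv - M) / δ + 1) with hc
  have hc1 : (1:ℝ) ≤ c := le_max_left _ _
  have hc0 : (0:ℝ) ≤ c := le_trans zero_le_one hc1
  have hcgt : (R Yv - M) / δ < c := lt_of_lt_of_le (lt_add_one _) (le_max_right _ _)
  refine ⟨fun i => v i + c * (u i - v i), ?_, ?_⟩
  · simp [Finset.sum_add_distrib, Finset.sum_sub_distrib, hu, hv,
      ← Finset.mul_sum]
  · have hret : ∀ t, (∑ i, (v i + c * (u i - v i)) * X i t) = Yv t + c * d t := by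
      intro t
      simp only [hYv, hd, add_mul, Finset.sum_add_distrib, mul_assoc, ← Finset.mul_sum,
        sub_mul, Finset.sum_sub_distrib, mul_sub]
    have h1 : R (fun t => ∑ i, (v i + c * (u i - v i)) * X i t) ≤ R (Yv + fun _ => c * δ) := by
      apply hmono
      intro t
      rw [hret t]
      have : c * δ ≤ c * d t := mul_le_mul_of_nonneg_left (hδle t) hc0
      simpa using add_le_add_left this (Yv t)
    rw [hcash] at h1
    have h2 : R Yv - M < c * δ := by
      rw [div_lt_iff₀ hδpos] at hcgt
      linarith
    linarith
end

section
/- (Theorem 2.) The Minimax (Maximal Loss) optimization problem min ML(w|X) subject to ∑_i w_i = 1 has no solution (i.e. there is no normalized portfolio w₀ with ML(w₀|X) ≤ ML(w|X) for all normalized portfolios w) if and only if there exists a pair of normalized portfolios u, v such that u strictly dominates v on X at every observation. -/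
open Finset

section Helpers

variable {T : ℕ}

private lemma cont_inf' (S : Finset (Fin T)) (hS : S.Nonempty) :
    Continuous (fun v : Fin T → ℝ => S.inf' hS v) := by
  induction hS using Finset.Nonempty.cons_induction with
  | singleton a =>
      have : (fun v : Fin T → ℝ => Finset.inf' {a} (Finset.singleton_nonempty a) v)
          = fun v : Fin T → ℝ => v a := funext fun v => Finset.inf'_singleton v
      rw [this]; exact continuous_apply a
  | cons a s ha hs ih =>
      have : (fun v : Fin T → ℝ => (Finset.cons a s ha).inf' (Finset.cons_nonempty ha) v)
          = fun v : Fin T → ℝ => min (v a) (s.inf' hs v) :=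
        funext fun v => Finset.inf'_cons hs v
      rw [this]
      exact (continuous_apply a).min ih

private lemma inf'_smul' (S : Finset (Fin T)) (hS : S.Nonempty) {c : ℝ} (hc : 0 ≤ c)
    (v : Fin T → ℝ) : S.inf' hS (fun t => c * v t) = c * S.inf' hS v := by
  induction hS using Finset.Nonempty.cons_induction with
  | singleton a => simp
  | cons a s ha hs ih =>
      rw [Finset.inf'_cons (H := hs), Finset.inf'_cons (H := hs), ih,
        ← mul_min_of_nonneg _ _ hc]

private lemma sup'_neg_eq (S : Finset (Fin T)) (hS : S.Nonempty) (f : Fin T → ℝ) :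
    S.sup' hS (fun t => -(f t)) = - S.inf' hS f := by
  induction hS using Finset.Nonempty.cons_induction with
  | singleton a => simp
  | cons a s ha hs ih =>
      rw [Finset.sup'_cons (H := hs), Finset.inf'_cons (H := hs), ih]
      show max (-(f a)) (-(s.inf' hs f)) = -(min (f a) (s.inf' hs f))
      rcases le_total (f a) (s.inf' hs f) with h | h
      · rw [min_eq_left h, max_eq_left (by linarith)]
      · rw [min_eq_right h, max_eq_right (by linarith)]

/-- Key polyhedral lemma: if a linear subspace `W` of `ℝ^T` contains no vector that is
strictly positive on all coordinates of `S`, then the maximum over the affine subspace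
`y₀ + W` of the minimum coordinate over `S` is attained. -/
private lemma key (n : ℕ) : ∀ (S : Finset (Fin T)) (hS : S.Nonempty), S.card ≤ n →
    ∀ (W : Submodule ℝ (Fin T → ℝ)) (y₀ : Fin T → ℝ),
    (¬ ∃ w ∈ W, ∀ t ∈ S, 0 < w t) →
    ∃ d ∈ W, ∀ w ∈ W, S.inf' hS (y₀ + w) ≤ S.inf' hS (y₀ + d) := by
  induction n with
  | zero =>
      intro S hS hcard
      have := Finset.card_pos.mpr hS
      omega
  | succ n ih =>
    intro S hS hcard W y₀ hcond
    classical
    by_cases hacase : ∃ w ∈ W, (∀ t ∈ S, 0 ≤ w t) ∧ ∃ t ∈ S, 0 < w t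
    · -- Case (a): there is a nonzero nonnegative direction; reduce to its zero set.
      obtain ⟨w, hwW, hw0, t₁, ht₁S, ht₁⟩ := hacase
      set Z : Finset (Fin T) := S.filter (fun t => w t ≤ 0) with hZdef
      have hZsub : Z ⊆ S := Finset.filter_subset _ _
      have ht₁Z : t₁ ∉ Z := by
        simp only [hZdef, Finset.mem_filter, not_and, not_le]
        exact fun _ => ht₁
      have hZzero : ∀ t ∈ Z, w t = 0 := fun t ht =>
        le_antisymm (Finset.mem_filter.mp ht).2 (hw0 t (hZsub ht))
      have hSZpos : ∀ t ∈ S \ Z, 0 < w t := by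
        intro t ht
        rcases Finset.mem_sdiff.mp ht with ⟨htS, htZ⟩
        by_contra h
        exact htZ (Finset.mem_filter.mpr ⟨htS, not_lt.mp h⟩)
      have hZne : Z.Nonempty := by
        rcases Finset.eq_empty_or_nonempty Z with h | h
        · exact absurd ⟨w, hwW, fun t ht =>
            hSZpos t (Finset.mem_sdiff.mpr ⟨ht, by simp [h]⟩)⟩ hcond
        · exact h
      have hSZne : (S \ Z).Nonempty := ⟨t₁, Finset.mem_sdiff.mpr ⟨ht₁S, ht₁Z⟩⟩
      set m := (S \ Z).inf' hSZne w with hm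
      have hm0 : 0 < m := by
        rw [hm, Finset.lt_inf'_iff]
        exact hSZpos
      have hcondZ : ¬ ∃ w' ∈ W, ∀ t ∈ Z, 0 < w' t := by
        rintro ⟨w', hw'W, hw'pos⟩
        apply hcond
        set M : ℝ := max (S.sup' hS (fun t => -(w' t))) 0 with hM
        have hM0 : 0 ≤ M := le_max_right _ _
        set lam := (M + 1) / m with hlam
        have hlam0 : 0 ≤ lam := div_nonneg (by linarith) hm0.le
        refine ⟨w' + lam • w, W.add_mem hw'W (W.smul_mem lam hwW), ?_⟩
        intro t htS
        by_cases htZ : t ∈ Z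
        · have hwt : w t = 0 := hZzero t htZ
          simpa [hwt] using hw'pos t htZ
        · have hmem : t ∈ S \ Z := Finset.mem_sdiff.mpr ⟨htS, htZ⟩
          have h1 : m ≤ w t := Finset.inf'_le _ hmem
          have h2 : -(w' t) ≤ M :=
            le_trans (Finset.le_sup' (fun t => -(w' t)) htS) (le_max_left _ _)
          have h3 : M + 1 ≤ lam * w t := by
            have hlm : lam * m = M + 1 := by rw [hlam]; exact div_mul_cancel₀ _ hm0.ne'
            nlinarith
          simp only [Pi.add_apply, Pi.smul_apply, smul_eq_mul]
          linarith
      have hcardZ : Z.card ≤ n := by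
        have : Z.card < S.card := Finset.card_lt_card ⟨hZsub, fun h => ht₁Z (h ht₁S)⟩
        omega
      obtain ⟨d, hdW, hopt⟩ := ih Z hZne hcardZ W y₀ hcondZ
      set C := Z.inf' hZne (y₀ + d) with hC
      set Q : ℝ := max ((S \ Z).sup' hSZne (fun t => C - y₀ t - d t)) 0 with hQ
      have hQ0 : 0 ≤ Q := le_max_right _ _
      set lam := Q / m with hlam
      have hlam0 : 0 ≤ lam := div_nonneg hQ0 hm0.le
      refine ⟨d + lam • w, W.add_mem hdW (W.smul_mem _ hwW), ?_⟩
      intro w'' hw''W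
      have h1 : S.inf' hS (y₀ + w'') ≤ Z.inf' hZne (y₀ + w'') :=
        Finset.inf'_mono _ hZsub hZne
      have h2 : Z.inf' hZne (y₀ + w'') ≤ C := hopt w'' hw''W
      have h3 : C ≤ S.inf' hS (y₀ + (d + lam • w)) := by
        rw [Finset.le_inf'_iff]
        intro t htS
        by_cases htZ : t ∈ Z
        · have hwt : w t = 0 := hZzero t htZ
          have h4 : C ≤ (y₀ + d) t := Finset.inf'_le _ htZ
          simp only [Pi.add_apply] at h4 ⊢
          simp only [Pi.smul_apply, smul_eq_mul, hwt]
          linarith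
        · have hmem : t ∈ S \ Z := Finset.mem_sdiff.mpr ⟨htS, htZ⟩
          have h4 : m ≤ w t := Finset.inf'_le _ hmem
          have h5 : C - y₀ t - d t ≤ Q :=
            le_trans (Finset.le_sup' (fun t => C - y₀ t - d t) hmem) (le_max_left _ _)
          have h6 : Q ≤ lam * w t := by
            have hlm : lam * m = Q := by rw [hlam]; exact div_mul_cancel₀ _ hm0.ne'
            nlinarith
          simp only [Pi.add_apply, Pi.smul_apply, smul_eq_mul]
          linarith
      linarith
    · -- Case (b): every direction that is nonnegative on S vanishes on S; compactness.
      push_neg at hacase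
      set P : (Fin T → ℝ) →ₗ[ℝ] (Fin T → ℝ) :=
        { toFun := fun v t => if t ∈ S then v t else 0
          map_add' := by intro a b; funext t; by_cases h : t ∈ S <;> simp [h]
          map_smul' := by intro c a; funext t; by_cases h : t ∈ S <;> simp [h] } with hPdef
      have hPapp : ∀ (v : Fin T → ℝ) (t : Fin T), t ∈ S → P v t = v t := by
        intro v t ht; simp [hPdef, ht]
      have hPapp' : ∀ (v : Fin T → ℝ) (t : Fin T), t ∉ S → P v t = 0 := by
        intro v t ht; simp [hPdef, ht]
      set W' := W.map P with hW'
      have hW'zero : ∀ v ∈ W', (∀ t ∈ S, 0 ≤ v t) → v = 0 := by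
        rintro v hv hpos
        obtain ⟨u, huW, rfl⟩ := Submodule.mem_map.mp hv
        have h1 : ∀ t' ∈ S, 0 ≤ u t' := by
          intro t' ht'
          have := hpos t' ht'
          rwa [hPapp u t' ht'] at this
        have h2 := hacase u huW h1
        funext t
        by_cases ht : t ∈ S
        · rw [hPapp u t ht]
          exact le_antisymm (h2 t ht) (h1 t ht)
        · exact hPapp' u t ht
      by_cases hW'bot : W' = ⊥
      · refine ⟨0, W.zero_mem, ?_⟩
        intro w hwW
        have hPw : P w = 0 := by
          have : P w ∈ W' := Submodule.mem_map_of_mem hwW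
          rw [hW'bot, Submodule.mem_bot] at this
          exact this
        have hw0 : ∀ t ∈ S, w t = 0 := by
          intro t ht
          have := congrFun hPw t
          rwa [hPapp w t ht] at this
        refine le_of_eq (Finset.inf'_congr hS rfl ?_)
        intro t ht
        simp [hw0 t ht]
      · obtain ⟨v₁, hv₁W, hv₁ne⟩ := Submodule.exists_mem_ne_zero_of_ne_bot hW'bot
        have hWclosed : IsClosed (W' : Set (Fin T → ℝ)) := W'.closed_of_finiteDimensional
        -- maximize the min over the unit sphere within W'
        have hKcomp : IsCompact ((W' : Set (Fin T → ℝ)) ∩ Metric.sphere 0 1) :=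
          (isCompact_sphere (0 : Fin T → ℝ) 1).inter_left hWclosed
        have hv₁norm : ‖v₁‖ ≠ 0 := norm_ne_zero_iff.mpr hv₁ne
        have hKne : ((W' : Set (Fin T → ℝ)) ∩ Metric.sphere 0 1).Nonempty := by
          refine ⟨‖v₁‖⁻¹ • v₁, W'.smul_mem _ hv₁W, ?_⟩
          simp [norm_smul, abs_of_nonneg (norm_nonneg v₁), inv_mul_cancel₀ hv₁norm]
        obtain ⟨u, ⟨huW', huS⟩, humax⟩ :=
          hKcomp.exists_isMaxOn hKne ((cont_inf' S hS).continuousOn)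
        set ε : ℝ := -(S.inf' hS u) with hε
        have hunorm : ‖u‖ = 1 := by simpa using huS
        have hε0 : 0 < ε := by
          rw [hε, neg_pos]
          by_contra h
          push_neg at h
          have h0 : ∀ t ∈ S, 0 ≤ u t := fun t ht => le_trans h (Finset.inf'_le _ ht)
          have := hW'zero u huW' h0
          rw [this] at hunorm
          simp at hunorm
        have hbound : ∀ v ∈ W', S.inf' hS v ≤ -ε * ‖v‖ := by
          intro v hv
          rcases eq_or_ne v 0 with rfl | hvne
          · simp [Finset.inf'_const]
          · have hnorm : (0:ℝ) < ‖v‖ := norm_pos_iff.mpr hvne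
            have hunit : (‖v‖⁻¹ • v) ∈ (W' : Set (Fin T → ℝ)) ∩ Metric.sphere 0 1 := by
              refine ⟨W'.smul_mem _ hv, ?_⟩
              simp [norm_smul, abs_of_nonneg (norm_nonneg v),
                inv_mul_cancel₀ hnorm.ne']
            have hle : S.inf' hS (‖v‖⁻¹ • v) ≤ S.inf' hS u := humax hunit
            have hveq : S.inf' hS v = ‖v‖ * S.inf' hS (‖v‖⁻¹ • v) := by
              rw [show S.inf' hS (‖v‖⁻¹ • v) = S.inf' hS (fun t => ‖v‖⁻¹ * v t) from rfl,
                inf'_smul' S hS (by positivity)]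
              field_simp
            rw [hveq]
            calc ‖v‖ * S.inf' hS (‖v‖⁻¹ • v) ≤ ‖v‖ * (-ε) := by
                  apply mul_le_mul_of_nonneg_left _ (norm_nonneg v)
                  rw [hε, neg_neg]; exact hle
              _ = -ε * ‖v‖ := by ring
        -- maximize over a large closed ball within W'
        set g : (Fin T → ℝ) → ℝ := fun v => S.inf' hS (y₀ + v) with hg
        have hgcont : Continuous g := (cont_inf' S hS).comp (continuous_const.add continuous_id)
        have hinfsup : S.inf' hS y₀ ≤ S.sup' hS y₀ := by
          obtain ⟨t₀, ht₀⟩ := hS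
          exact le_trans (Finset.inf'_le _ ht₀) (Finset.le_sup' _ ht₀)
        set R : ℝ := (S.sup' hS y₀ - S.inf' hS y₀) / ε with hR
        have hR0 : 0 ≤ R := div_nonneg (by linarith) hε0.le
        have hCcomp : IsCompact ((W' : Set (Fin T → ℝ)) ∩ Metric.closedBall 0 R) :=
          (isCompact_closedBall (0 : Fin T → ℝ) R).inter_left hWclosed
        have hCne : ((W' : Set (Fin T → ℝ)) ∩ Metric.closedBall 0 R).Nonempty :=
          ⟨0, W'.zero_mem, Metric.mem_closedBall_self hR0⟩
        obtain ⟨v₀, ⟨hv₀W, hv₀B⟩, hv₀max⟩ := hCcomp.exists_isMaxOn hCne hgcont.continuousOn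
        have hzeroC : (0 : Fin T → ℝ) ∈ (W' : Set (Fin T → ℝ)) ∩ Metric.closedBall 0 R :=
          ⟨W'.zero_mem, Metric.mem_closedBall_self hR0⟩
        have hglobal : ∀ v ∈ W', g v ≤ g v₀ := by
          intro v hv
          by_cases hvR : ‖v‖ ≤ R
          · exact hv₀max ⟨hv, by simpa [Metric.mem_closedBall, dist_zero_right] using hvR⟩
          · push_neg at hvR
            have hb : g v ≤ S.sup' hS y₀ - ε * ‖v‖ := by
              obtain ⟨t₀, ht₀S, ht₀⟩ := Finset.exists_mem_eq_inf' hS v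
              have h1 : g v ≤ y₀ t₀ + v t₀ := Finset.inf'_le _ ht₀S
              have h3 : S.inf' hS v ≤ -ε * ‖v‖ := hbound v hv
              have h4 : y₀ t₀ ≤ S.sup' hS y₀ := Finset.le_sup' _ ht₀S
              rw [← ht₀] at *
              linarith
            have h5 : g 0 ≤ g v₀ := hv₀max hzeroC
            have h6 : g 0 = S.inf' hS y₀ := by simp [hg]
            have h7 : S.sup' hS y₀ - ε * ‖v‖ < S.inf' hS y₀ := by
              have hx : ε * R < ε * ‖v‖ := mul_lt_mul_of_pos_left hvR hε0
              have hy : ε * R = S.sup' hS y₀ - S.inf' hS y₀ := by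
                rw [hR]; exact mul_div_cancel₀ _ hε0.ne'
              linarith
            linarith
        obtain ⟨d, hdW, hPd⟩ := Submodule.mem_map.mp hv₀W
        refine ⟨d, hdW, ?_⟩
        intro w hwW
        have e1 : S.inf' hS (y₀ + w) = g (P w) :=
          Finset.inf'_congr hS rfl (fun t ht => by simp [hPapp w t ht])
        have e2 : S.inf' hS (y₀ + d) = g (P d) :=
          Finset.inf'_congr hS rfl (fun t ht => by simp [hPapp d t ht])
        rw [e1, e2, hPd]
        exact hglobal (P w) (Submodule.mem_map_of_mem hwW)

end Helpers

/-- The Maximal Loss (Minimax) objective of the portfolio `w` on the sample `X`: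
the largest loss `-∑ i, w i * X i t` over the observations `t`. -/
noncomputable def ML {N T : ℕ} (X : Fin N → Fin T → ℝ) (w : Fin N → ℝ) : ℝ :=
  ⨆ t, -(∑ i, w i * X i t)

/-- Theorem 2: the Minimax problem over normalized portfolios has no solution
if and only if there is a pair of normalized portfolios such that one strictly
dominates the other at every observation of the sample. -/
theorem minimax_no_solution_iff_strictly_dominating_pair {N T : ℕ} (hN : 1 ≤ N)
    (hT : 1 ≤ T) (X : Fin N → Fin T → ℝ) :
    (¬ ∃ w₀ : Fin N → ℝ, (∑ i, w₀ i = 1) ∧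
        ∀ w : Fin N → ℝ, (∑ i, w i = 1) → ML X w₀ ≤ ML X w) ↔
    (∃ u v : Fin N → ℝ, (∑ i, u i = 1) ∧ (∑ i, v i = 1) ∧
        ∀ t, ∑ i, v i * X i t < ∑ i, u i * X i t) := by
  classical
  have hTne : Nonempty (Fin T) := ⟨⟨0, hT⟩⟩
  set Φ : (Fin N → ℝ) →ₗ[ℝ] (Fin T → ℝ) :=
    { toFun := fun w t => ∑ i, w i * X i t
      map_add' := by
        intro a b; funext t
        simp [add_mul, Finset.sum_add_distrib]
      map_smul' := by
        intro c a; funext t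
        simp [Finset.mul_sum, mul_assoc] } with hΦ
  have hΦapp : ∀ (w : Fin N → ℝ) (t : Fin T), Φ w t = ∑ i, w i * X i t := fun _ _ => rfl
  have hML : ∀ w : Fin N → ℝ, ML X w = - (univ.inf' univ_nonempty (Φ w)) := by
    intro w
    rw [ML, ← Finset.sup'_univ_eq_ciSup,
      sup'_neg_eq univ univ_nonempty (fun t => ∑ i, w i * X i t)]
    rfl
  constructor
  · -- no solution → dominating pair, by contraposition
    intro hno
    by_contra hpair
    apply hno
    -- base normalized portfolio
    set i₀ : Fin N := ⟨0, hN⟩ with hi₀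
    set v₀ : Fin N → ℝ := Pi.single i₀ 1 with hv₀
    have hv₀sum : ∑ i, v₀ i = 1 := by
      simp [hv₀, Finset.sum_pi_single]
    set sumF : (Fin N → ℝ) →ₗ[ℝ] ℝ :=
      { toFun := fun w => ∑ i, w i
        map_add' := by intro a b; simp [Finset.sum_add_distrib]
        map_smul' := by intro c a; simp [Finset.mul_sum] } with hsumF
    set W : Submodule ℝ (Fin T → ℝ) := (LinearMap.ker sumF).map Φ with hW
    have hcond : ¬ ∃ w ∈ W, ∀ t ∈ (univ : Finset (Fin T)), 0 < w t := by
      rintro ⟨w, hwW, hpos⟩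
      obtain ⟨d, hd, rfl⟩ := Submodule.mem_map.mp hwW
      have hdsum : ∑ i, d i = 0 := hd
      apply hpair
      refine ⟨v₀ + d, v₀, ?_, hv₀sum, ?_⟩
      · simp [Finset.sum_add_distrib, hv₀sum, hdsum]
      · intro t
        have h1 := hpos t (Finset.mem_univ t)
        have h2 : Φ (v₀ + d) t = Φ v₀ t + Φ d t := by
          rw [map_add]; rfl
        have h3 : ∑ i, (v₀ + d) i * X i t = Φ (v₀ + d) t := rfl
        have h4 : ∑ i, v₀ i * X i t = Φ v₀ t := rfl
        rw [h3, h4, h2]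
        linarith
    obtain ⟨e, heW, hopt⟩ := key T univ univ_nonempty (by simp) W (Φ v₀) hcond
    obtain ⟨d₀, hd₀, rfl⟩ := Submodule.mem_map.mp heW
    have hd₀sum : ∑ i, d₀ i = 0 := hd₀
    refine ⟨v₀ + d₀, by simp [Finset.sum_add_distrib, hv₀sum, hd₀sum], ?_⟩
    intro w hwsum
    have hmem : Φ (w - v₀) ∈ W := by
      refine Submodule.mem_map_of_mem ?_
      have : sumF (w - v₀) = 0 := by
        have : ∑ i, (w - v₀) i = ∑ i, w i - ∑ i, v₀ i := by
          simp [Finset.sum_sub_distrib]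
        simpa [hsumF, this, hwsum, hv₀sum] using sub_self (1:ℝ)
      exact this
    have h5 := hopt (Φ (w - v₀)) hmem
    have e1 : Φ v₀ + Φ (w - v₀) = Φ w := by rw [← map_add]; ring_nf
    have e2 : Φ v₀ + Φ d₀ = Φ (v₀ + d₀) := by rw [← map_add]
    rw [e1, e2] at h5
    rw [hML, hML]
    linarith
  · -- dominating pair → no solution
    rintro ⟨u, v, hu, hv, hdom⟩ ⟨w₀, hw₀, hmin⟩
    set w : Fin N → ℝ := w₀ + (u - v) with hwdef
    have hwsum : ∑ i, w i = 1 := by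
      simp [hwdef, Finset.sum_add_distrib, Finset.sum_sub_distrib, hu, hv, hw₀]
    have h1 := hmin w hwsum
    set δ : ℝ := univ.inf' univ_nonempty (fun t => Φ u t - Φ v t) with hδ
    have hδ0 : 0 < δ := by
      rw [hδ, Finset.lt_inf'_iff]
      intro t _
      have := hdom t
      simp only [hΦapp, sub_pos]
      exact this
    have h2 : univ.inf' univ_nonempty (Φ w₀) + δ ≤ univ.inf' univ_nonempty (Φ w) := by
      rw [Finset.le_inf'_iff]
      intro t _
      have ha : univ.inf' univ_nonempty (Φ w₀) ≤ Φ w₀ t := Finset.inf'_le _ (Finset.mem_univ t)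
      have hb : δ ≤ Φ u t - Φ v t := Finset.inf'_le _ (Finset.mem_univ t)
      have hc : Φ w t = Φ w₀ t + (Φ u t - Φ v t) := by
        rw [hwdef, map_add, map_sub]
        simp
      rw [hc]
      linarith
    rw [hML, hML] at h1
    linarith
end

section
/- (Theorem 2, unboundedness form.) The Maximal Loss objective is unbounded from below over normalized portfolios, i.e. inf{ML(w|X) : w normalized} = −∞, if and only if there exists a pair of normalized portfolios u, v such that u strictly dominates v on X at every observation. -/
/-- Theorem 2, unboundedness form: the Maximal Loss objective is unbounded from below
over normalized portfolios if and only if there is a pair of normalized portfolios such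
that one strictly dominates the other at every observation of the sample. -/
theorem minimax_unbounded_iff_strictly_dominating_pair {N T : ℕ} (hN : 1 ≤ N)
    (hT : 1 ≤ T) (X : Fin N → Fin T → ℝ) :
    (∀ M : ℝ, ∃ w : Fin N → ℝ, (∑ i, w i = 1) ∧ ML X w < M) ↔
    (∃ u v : Fin N → ℝ, (∑ i, u i = 1) ∧ (∑ i, v i = 1) ∧
        ∀ t, ∑ i, v i * X i t < ∑ i, u i * X i t) := by
  haveI : Nonempty (Fin T) := ⟨⟨0, hT⟩⟩
  constructor
  · intro h
    set v : Fin N → ℝ := fun i => if i = ⟨0, hN⟩ then 1 else 0 with hvdef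
    have hv : ∑ i, v i = 1 := by simp [hvdef]
    set S : ℝ := ⨆ t, ∑ i, v i * X i t with hS
    obtain ⟨w, hw, hwM⟩ := h (-S)
    refine ⟨w, v, hw, hv, fun t => ?_⟩
    have h1 : ∑ i, v i * X i t ≤ S := by
      rw [hS]
      exact le_ciSup (f := fun t => ∑ i, v i * X i t) (Set.finite_range _).bddAbove t
    have h2 : -(∑ i, w i * X i t) ≤ ML X w := by
      unfold ML
      exact le_ciSup (f := fun t => -(∑ i, w i * X i t)) (Set.finite_range _).bddAbove t
    linarith
  · rintro ⟨u, v, hu, hv, hd⟩ M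
    set g : Fin T → ℝ := fun t =>
      (-(∑ i, v i * X i t) - M) / (∑ i, u i * X i t - ∑ i, v i * X i t) with hg
    set c : ℝ := (⨆ t, g t) + 1 with hc
    set w : Fin N → ℝ := fun i => v i + c * (u i - v i) with hwdef
    have hwsum : ∑ i, w i = 1 := by
      simp only [hwdef]
      rw [Finset.sum_add_distrib, ← Finset.mul_sum, Finset.sum_sub_distrib, hu, hv]
      ring
    have hsum : ∀ t, ∑ i, w i * X i t
        = ∑ i, v i * X i t + c * (∑ i, u i * X i t - ∑ i, v i * X i t) := by
      intro t
      rw [← Finset.sum_sub_distrib, Finset.mul_sum, ← Finset.sum_add_distrib]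
      apply Finset.sum_congr rfl
      intros
      simp only [hwdef]
      ring
    refine ⟨w, hwsum, ?_⟩
    obtain ⟨t₀, ht₀⟩ := Finite.exists_max (fun t => -(∑ i, w i * X i t))
    have hML : ML X w ≤ -(∑ i, w i * X i t₀) := ciSup_le ht₀
    have hδ : 0 < ∑ i, u i * X i t₀ - ∑ i, v i * X i t₀ := sub_pos.mpr (hd t₀)
    have hgc : g t₀ < c :=
      lt_of_le_of_lt (le_ciSup (Set.finite_range _).bddAbove t₀) (lt_add_one _)
    have h3 : -(∑ i, v i * X i t₀) - M
        < c * (∑ i, u i * X i t₀ - ∑ i, v i * X i t₀) := by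
      rw [hg] at hgc
      exact (div_lt_iff₀ hδ).mp hgc
    have h4 := hsum t₀
    linarith
end

section
/- (Key step in the proof of Theorem 2.) Suppose the Maximal Loss objective is unbounded from below over normalized portfolios, i.e. for every u ∈ ℝ there is a normalized portfolio w with ML(w|X) < u. Then there exists a normalized portfolio w* whose return strictly exceeds every single-asset return at every observation: ∑_j w*_j x_{jt} > x_{it} for all assets i and all observations t. In particular, w* strictly dominates each single-asset portfolio e_i (the i-th standard basis vector) on X at every observation. -/
/-- Key step in the proof of Theorem 2: if Maximal Loss is unbounded from below over
normalized portfolios, then some normalized portfolio `w*` strictly outperforms every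
single asset at every observation; in particular `w*` strictly dominates each
single-asset portfolio `e i` at every observation. -/
theorem exists_portfolio_dominating_all_assets {N T : ℕ} (hN : 1 ≤ N) (hT : 1 ≤ T)
    (X : Fin N → Fin T → ℝ)
    (hub : ∀ u : ℝ, ∃ w : Fin N → ℝ, (∑ i, w i = 1) ∧ ML X w < u) :
    ∃ wstar : Fin N → ℝ, (∑ j, wstar j = 1) ∧
      (∀ i t, X i t < ∑ j, wstar j * X j t) ∧
      (∀ i t, ∑ j, (Pi.single i 1 : Fin N → ℝ) j * X j t < ∑ j, wstar j * X j t) := by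
  haveI : NeZero N := ⟨Nat.one_le_iff_ne_zero.mp hN⟩
  haveI : NeZero T := ⟨Nat.one_le_iff_ne_zero.mp hT⟩
  have hne : (Finset.univ : Finset (Fin N × Fin T)).Nonempty := Finset.univ_nonempty
  set M := Finset.sup' Finset.univ hne (fun p : Fin N × Fin T => X p.1 p.2) with hM
  obtain ⟨w, hw1, hw2⟩ := hub (-M)
  have key : ∀ i t, X i t < ∑ j, w j * X j t := by
    intro i t
    have h1 : -(∑ j, w j * X j t) ≤ ML X w :=
      le_ciSup (Finite.bddAbove_range fun t => -(∑ j, w j * X j t)) t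
    have h2 : -(∑ j, w j * X j t) < -M := lt_of_le_of_lt h1 hw2
    have h3 : M < ∑ j, w j * X j t := by linarith
    exact lt_of_le_of_lt (Finset.le_sup' (f := fun p : Fin N × Fin T => X p.1 p.2)
      (b := (i, t)) (Finset.mem_univ _)) h3
  refine ⟨w, hw1, key, fun i t => ?_⟩
  have : ∑ j, (Pi.single i 1 : Fin N → ℝ) j * X j t = X i t := by
    rw [Finset.sum_eq_single i]
    · simp
    · intro b _ hb; simp [Pi.single_apply, hb]
    · simp
  rw [this]; exact key i t
end

section
/- (Corollary 2, abstract probabilistic form.) Let (Ω, F, P) be a probability space and let X : Ω → (Fin N → Fin T → ℝ) be a random sample of returns. Let R be a coherent risk functional. Define D = {ω ∈ Ω : there exist normalized portfolios u, v with ∑_i u_i X(ω)_{it} > ∑_i v_i X(ω)_{it} for all t} and U = {ω ∈ Ω : the minimization of ρ̂(·|X(ω)) over normalized portfolios has no solution}. Then D ⊆ U; consequently, if D and U are measurable, the probability that the portfolio optimization problem under R is unfeasible on the sample is at least the probability that a strictly dominating pair of portfolios exists: P(U) ≥ P(D). -/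
/-- Corollary 2, abstract probabilistic form: for a random sample of returns, the event
`D` that some normalized portfolio strictly dominates another on the sample is contained
in the event `U` that the minimization of the coherent risk estimator over normalized
portfolios has no solution; hence, when these events are measurable, `P D ≤ P U`. -/
theorem prob_unfeasible_ge_prob_dominating_pair {Ω : Type*} [MeasurableSpace Ω]
    (P : MeasureTheory.Measure Ω) [MeasureTheory.IsProbabilityMeasure P]
    {N T : ℕ} (hN : 1 ≤ N) (hT : 1 ≤ T)
    (R : (Fin T → ℝ) → ℝ) (hR : IsCoherent R)
    (X : Ω → Fin N → Fin T → ℝ) (D U : Set Ω)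
    (hD : D = {ω | ∃ u v : Fin N → ℝ, (∑ i, u i = 1) ∧ (∑ i, v i = 1) ∧
        ∀ t, ∑ i, v i * X ω i t < ∑ i, u i * X ω i t})
    (hU : U = {ω | ¬ ∃ w₀ : Fin N → ℝ, (∑ i, w₀ i = 1) ∧
        ∀ w : Fin N → ℝ, (∑ i, w i = 1) →
          R (fun t => ∑ i, w₀ i * X ω i t) ≤ R (fun t => ∑ i, w i * X ω i t)}) :
    D ⊆ U ∧ (MeasurableSet D → MeasurableSet U → P D ≤ P U) := by
  obtain ⟨hmono, hsub, hhom, hcash⟩ := hR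
  have hR0 : R 0 = 0 := by
    have := hhom 2 0 (by norm_num)
    rw [smul_zero] at this
    linarith
  have hDU : D ⊆ U := by
    intro ω hω
    rw [hD] at hω
    rw [hU]
    obtain ⟨u, v, hu, hv, hlt⟩ := hω
    rintro ⟨w₀, hw₀, hopt⟩
    set d : Fin T → ℝ := fun t => ∑ i, u i * X ω i t - ∑ i, v i * X ω i t with hd
    have hdpos : ∀ t, 0 < d t := fun t => sub_pos.mpr (hlt t)
    have hTne : (Finset.univ : Finset (Fin T)).Nonempty := by
      exact ⟨⟨0, hT⟩, Finset.mem_univ _⟩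
    set ε : ℝ := Finset.univ.inf' hTne d with hε
    have hεpos : 0 < ε := by
      rw [hε]
      exact (Finset.lt_inf'_iff hTne).mpr (fun t _ => hdpos t)
    have hεle : ∀ t, ε ≤ d t := fun t => Finset.inf'_le d (Finset.mem_univ t)
    -- R d ≤ -ε
    have hRd : R d ≤ -ε := by
      have h1 : R d ≤ R ((0 : Fin T → ℝ) + fun _ => ε) := by
        apply hmono
        intro t
        simpa using hεle t
      have h2 : R ((0 : Fin T → ℝ) + fun _ => ε) = -ε := by
        rw [hcash ε 0, hR0]; ring
      linarith
    set w : Fin N → ℝ := fun i => w₀ i + u i - v i with hw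
    have hwsum : ∑ i, w i = 1 := by
      simp only [hw]
      rw [Finset.sum_sub_distrib, Finset.sum_add_distrib, hw₀, hu, hv]
      ring
    have hret : (fun t => ∑ i, w i * X ω i t)
        = (fun t => ∑ i, w₀ i * X ω i t) + d := by
      funext t
      simp only [hw, hd, Pi.add_apply]
      rw [← Finset.sum_sub_distrib, ← Finset.sum_add_distrib]
      exact Finset.sum_congr rfl fun i _ => by ring
    have h3 := hopt w hwsum
    have h4 := hsub (fun t => ∑ i, w₀ i * X ω i t) d
    rw [hret] at h3
    linarith
  exact ⟨hDU, fun _ _ => MeasureTheory.measure_mono hDU⟩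
end
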